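/- For all integers n ≥ 3 and all integers k1, k2 with 1 ≤ k1 < k2 ≤ n−1, [∏_{m=k2+2}^{n} (1 − 3/C(m,2))] · (1/C(k2+1,2)) · [∏_{m=k1+2}^{k2} (1 − 1/C(m,2))] · (1/C(k1+1,2)) = 4(n+1)(n+2)/((n−1)(n−2)(k1+1)(k1+2)(k2+2)(k2+3)), where C(m,2) = m(m−1)/2 and empty products equal 1. -/
import Mathlib

lemma lemA (k : ℕ) (hk : 2 ≤ k) : ∀ n, k + 1 ≤ n →
    ∏ m ∈ Finset.Icc (k + 2) n, (1 - 3 / ((m : ℝ) * ((m : ℝ) - 1) / 2)) =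
    ((k : ℝ) - 1) * k * ((n : ℝ) + 1) * ((n : ℝ) + 2) /
      (((n : ℝ) - 2) * ((n : ℝ) - 1) * ((k : ℝ) + 2) * ((k : ℝ) + 3)) := by
  refine Nat.le_induction ?_ ?_
  · rw [Finset.Icc_eq_empty (by omega), Finset.prod_empty]
    have h0 : (2 : ℝ) ≤ (k : ℝ) := by exact_mod_cast hk
    have h1 : ((k : ℝ) + 1 - 2) ≠ 0 := by intro h; nlinarith
    have h2 : ((k : ℝ) + 1 - 1) ≠ 0 := by intro h; nlinarith
    have h3 : ((k : ℝ) + 2) ≠ 0 := by positivity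
    have h4 : ((k : ℝ) + 3) ≠ 0 := by positivity
    push_cast
    field_simp
    ring
  · intro n hn ih
    rw [Finset.prod_Icc_succ_top (by omega : k + 2 ≤ n + 1), ih]
    have h3 : (3 : ℝ) ≤ (n : ℝ) := by exact_mod_cast (by omega : 3 ≤ n)
    have h1 : ((n : ℝ) - 2) ≠ 0 := by intro h; nlinarith
    have h2 : ((n : ℝ) - 1) ≠ 0 := by intro h; nlinarith
    have h1' : ((n : ℝ) + 1 - 2) ≠ 0 := by intro h; nlinarith
    have h2' : ((n : ℝ) + 1 - 1) ≠ 0 := by intro h; nlinarith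
    have h4 : ((n : ℝ)) ≠ 0 := by intro h; nlinarith
    have h5 : ((n : ℝ) + 1) ≠ 0 := by intro h; nlinarith
    have hk2 : ((k : ℝ) + 2) ≠ 0 := by positivity
    have hk3 : ((k : ℝ) + 3) ≠ 0 := by positivity
    push_cast
    field_simp
    ring

lemma lemB (k : ℕ) (hk : 1 ≤ k) : ∀ n, k + 1 ≤ n →
    ∏ m ∈ Finset.Icc (k + 2) n, (1 - 1 / ((m : ℝ) * ((m : ℝ) - 1) / 2)) =
    (k : ℝ) * ((n : ℝ) + 1) / (((k : ℝ) + 2) * ((n : ℝ) - 1)) := by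
  refine Nat.le_induction ?_ ?_
  · rw [Finset.Icc_eq_empty (by omega), Finset.prod_empty]
    have h1 : (1 : ℝ) ≤ (k : ℝ) := by exact_mod_cast hk
    have h2 : (k : ℝ) ≠ 0 := by intro h; nlinarith
    have h2' : ((k : ℝ) + 1 - 1) ≠ 0 := by intro h; nlinarith
    have hk2 : ((k : ℝ) + 2) ≠ 0 := by positivity
    push_cast
    field_simp
    ring
  · intro n hn ih
    rw [Finset.prod_Icc_succ_top (by omega : k + 2 ≤ n + 1), ih]
    have h3 : (2 : ℝ) ≤ (n : ℝ) := by exact_mod_cast (by omega : 2 ≤ n)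
    have h2 : ((n : ℝ) - 1) ≠ 0 := by intro h; nlinarith
    have h2' : ((n : ℝ) + 1 - 1) ≠ 0 := by intro h; nlinarith
    have h4 : ((n : ℝ)) ≠ 0 := by intro h; nlinarith
    have h5 : ((n : ℝ) + 1) ≠ 0 := by intro h; nlinarith
    have hk2 : ((k : ℝ) + 2) ≠ 0 := by positivity
    push_cast
    field_simp
    ring

/-- Probability that two random pairs of tips sharing exactly one tip coalesce at
speciation events `k1 < k2` respectively (case (ii)), for a Yule tree with `n` tips. -/
theorem stmt4 (n k1 k2 : ℕ) (hn : 3 ≤ n) (hk1 : 1 ≤ k1) (hk12 : k1 < k2) (hk2 : k2 ≤ n - 1) :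
    (∏ m ∈ Finset.Icc (k2 + 2) n, (1 - 3 / ((m : ℝ) * ((m : ℝ) - 1) / 2))) *
      (1 / (((k2 : ℝ) + 1) * ((k2 : ℝ) + 1 - 1) / 2)) *
    (∏ m ∈ Finset.Icc (k1 + 2) k2, (1 - 1 / ((m : ℝ) * ((m : ℝ) - 1) / 2))) *
      (1 / (((k1 : ℝ) + 1) * ((k1 : ℝ) + 1 - 1) / 2)) =
    4 * ((n : ℝ) + 1) * ((n : ℝ) + 2) /
      (((n : ℝ) - 1) * ((n : ℝ) - 2) * ((k1 : ℝ) + 1) * ((k1 : ℝ) + 2) *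
        ((k2 : ℝ) + 2) * ((k2 : ℝ) + 3)) := by
  rw [lemA k2 (by omega) n (by omega), lemB k1 hk1 k2 (by omega)]
  have h1 : (1 : ℝ) ≤ (k1 : ℝ) := by exact_mod_cast hk1
  have h2 : (k1 : ℝ) + 1 ≤ (k2 : ℝ) := by exact_mod_cast hk12
  have h3 : (3 : ℝ) ≤ (n : ℝ) := by exact_mod_cast hn
  have hn1 : ((n : ℝ) - 1) ≠ 0 := by intro h; nlinarith
  have hn2 : ((n : ℝ) - 2) ≠ 0 := by intro h; nlinarith
  have hk10 : (k1 : ℝ) ≠ 0 := by intro h; nlinarith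
  have hk11 : ((k1 : ℝ) + 1) ≠ 0 := by intro h; nlinarith
  have hk11' : ((k1 : ℝ) + 1 - 1) ≠ 0 := by intro h; nlinarith
  have hk12' : ((k1 : ℝ) + 2) ≠ 0 := by intro h; nlinarith
  have hk20 : ((k2 : ℝ) - 1) ≠ 0 := by intro h; nlinarith
  have hk21 : (k2 : ℝ) ≠ 0 := by intro h; nlinarith
  have hk22 : ((k2 : ℝ) + 1) ≠ 0 := by intro h; nlinarith
  have hk22' : ((k2 : ℝ) + 1 - 1) ≠ 0 := by intro h; nlinarith
  have hk23 : ((k2 : ℝ) + 2) ≠ 0 := by intro h; nlinarith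
  have hk24 : ((k2 : ℝ) + 3) ≠ 0 := by intro h; nlinarith
  field_simp
  ring
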